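/- Let ħ, c > 0, Λ₀ ≥ 1 and b ≥ 0. Define the zero-point energy per unit area as a function of the mirror distance L > 0 by f(L) = (ħ(Λ₀^{3/2} − 1)/(6π c²))·(π²c²/L² + b/L)^{3/2}. Then for every L > 0 the Casimir pressure is −f′(L) = (ħ(Λ₀^{3/2} − 1)/(4π c²))·(2π²c²/L³ + b/L²)·√(π²c²/L² + b/L), and in particular −f′(L) ≥ 0: the Casimir force between the cavity mirrors, modified by the interaction with the 2D electron gas, is repulsive. -/

import Mathlib

/-- Repulsive Casimir force: for the zero-point energy per unit area
`f(L) = (ℏ(Λ₀^{3/2} − 1)/(6πc²))·(π²c²/L² + b/L)^{3/2}` of the cavity modified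
by the 2D electron gas, the Casimir pressure on the mirrors is
`−f′(L) = (ℏ(Λ₀^{3/2} − 1)/(4πc²))·(2π²c²/L³ + b/L²)·√(π²c²/L² + b/L) ≥ 0`,
i.e. the force between the cavity mirrors is repulsive. -/
theorem casimir_force_repulsive
    (ℏ c : ℝ) (hℏ : 0 < ℏ) (hc : 0 < c)
    (Λ₀ : ℝ) (hΛ₀ : 1 ≤ Λ₀) (b : ℝ) (hb : 0 ≤ b)
    (f : ℝ → ℝ)
    (hf : ∀ L : ℝ, f L =
      ℏ * (Λ₀ ^ ((3 : ℝ) / 2) - 1) / (6 * Real.pi * c ^ 2) *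
        (Real.pi ^ 2 * c ^ 2 / L ^ 2 + b / L) ^ ((3 : ℝ) / 2)) :
    ∀ L : ℝ, 0 < L →
      -deriv f L =
          ℏ * (Λ₀ ^ ((3 : ℝ) / 2) - 1) / (4 * Real.pi * c ^ 2) *
            (2 * Real.pi ^ 2 * c ^ 2 / L ^ 3 + b / L ^ 2) *
            Real.sqrt (Real.pi ^ 2 * c ^ 2 / L ^ 2 + b / L)
        ∧ 0 ≤ -deriv f L := by
  intro L hL
  have hLne : L ≠ 0 := ne_of_gt hL
  have hπ := Real.pi_pos
  set C := ℏ * (Λ₀ ^ ((3 : ℝ) / 2) - 1) / (6 * Real.pi * c ^ 2) with hC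
  set g : ℝ → ℝ := fun x => Real.pi ^ 2 * c ^ 2 / x ^ 2 + b / x with hgdef
  have hgpos : 0 < g L := by
    have h1 : 0 < Real.pi ^ 2 * c ^ 2 / L ^ 2 := by positivity
    have h2 : 0 ≤ b / L := by positivity
    simpa [hgdef] using add_pos_of_pos_of_nonneg h1 h2
  have hg' : HasDerivAt g (-(2 * Real.pi ^ 2 * c ^ 2 / L ^ 3 + b / L ^ 2)) L := by
    have h1 : HasDerivAt (fun x : ℝ => Real.pi ^ 2 * c ^ 2 / x ^ 2)
        ((0 * L ^ 2 - Real.pi ^ 2 * c ^ 2 * (2 * L ^ 1)) / (L ^ 2) ^ 2) L := by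
      simpa [Pi.div_def] using (hasDerivAt_const L (Real.pi ^ 2 * c ^ 2)).div
        (hasDerivAt_pow 2 L) (pow_ne_zero 2 hLne)
    have h2 : HasDerivAt (fun x : ℝ => b / x) ((0 * L - b * 1) / L ^ 2) L :=
      (hasDerivAt_const L b).div (hasDerivAt_id L) hLne
    have := h1.fun_add h2
    refine this.congr_deriv ?_
    field_simp
    ring
  have hf' : HasDerivAt f
      (C * ((-(2 * Real.pi ^ 2 * c ^ 2 / L ^ 3 + b / L ^ 2)) * ((3:ℝ)/2)
        * g L ^ ((3:ℝ)/2 - 1))) L := by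
    have h := (hg'.rpow_const (p := (3:ℝ)/2) (Or.inl (ne_of_gt hgpos))).const_mul C
    have heq : f = fun x => C * g x ^ ((3:ℝ)/2) := funext fun x => hf x
    rw [heq]
    convert h using 1
  have hderiv := hf'.deriv
  have hrpow : g L ^ ((3:ℝ)/2 - 1) = Real.sqrt (g L) := by
    rw [Real.sqrt_eq_rpow]
    norm_num
  have hmain : -deriv f L =
      ℏ * (Λ₀ ^ ((3 : ℝ) / 2) - 1) / (4 * Real.pi * c ^ 2) *
        (2 * Real.pi ^ 2 * c ^ 2 / L ^ 3 + b / L ^ 2) *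
        Real.sqrt (Real.pi ^ 2 * c ^ 2 / L ^ 2 + b / L) := by
    rw [hderiv, hrpow, hC]
    have : Real.sqrt (g L) = Real.sqrt (Real.pi ^ 2 * c ^ 2 / L ^ 2 + b / L) := rfl
    rw [this]
    field_simp
    ring
  refine ⟨hmain, ?_⟩
  rw [hmain]
  have h1 : (0:ℝ) ≤ Λ₀ ^ ((3 : ℝ) / 2) - 1 := by
    have := Real.one_le_rpow hΛ₀ (by norm_num : (0:ℝ) ≤ 3/2)
    linarith
  have h2 : (0:ℝ) ≤ 2 * Real.pi ^ 2 * c ^ 2 / L ^ 3 + b / L ^ 2 := by positivity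
  positivity
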